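/- Let H > 0, σ_H > 0, σ_g > 0, η > 0 with κ = H/(η σ_H). Define L(w) = L* + (H/2)(w - w*)², g(w) = L'(w) = H(w - w*), C(w) = σ_g + (2σ_H/H)(L(w) - L*), and p(w) = (1 + (2σ_H/(H σ_g))(L(w) - L*))^{-κ}. Then p satisfies the stationary Fokker–Planck equation: d/dw [ g(w) p(w) + (η/2) C(w) p'(w) ] = 0; in fact g(w) p(w) + (η/2) C(w) p'(w) = 0 for all w. -/

import Mathlib

/-- the power-law density satisfies the stationary Fokker–Planck equation:
the probability current `g·p + (η/2) C p'` vanishes identically (hence its derivative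
also vanishes). -/
theorem powerlaw_stationary_fokker_planck
    (H σH σg η κ Lstar wstar : ℝ)
    (hH : 0 < H) (hσH : 0 < σH) (hσg : 0 < σg) (hη : 0 < η)
    (hκ : κ = H / (η * σH))
    (L g C p : ℝ → ℝ)
    (hL : ∀ w, L w = Lstar + H / 2 * (w - wstar) ^ 2)
    (hg : ∀ w, g w = H * (w - wstar))
    (hC : ∀ w, C w = σg + 2 * σH / H * (L w - Lstar))
    (hp : ∀ w, p w = (1 + 2 * σH / (H * σg) * (L w - Lstar)) ^ (-κ)) :
    (∀ w, g w * p w + η / 2 * C w * deriv p w = 0) ∧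
    (∀ w, deriv (fun v => g v * p v + η / 2 * C v * deriv p v) w = 0) := by
  have hbase : ∀ w : ℝ, (0:ℝ) < 1 + σH / σg * (w - wstar) ^ 2 := by
    intro w; positivity
  have hpf : p = fun w => (1 + σH / σg * (w - wstar) ^ 2) ^ (-κ) := by
    funext w
    rw [hp, hL]
    congr 1
    field_simp
    ring
  have hderiv : ∀ w : ℝ, HasDerivAt p
      ((σH / σg * (2 * (w - wstar))) * (-κ) *
        (1 + σH / σg * (w - wstar) ^ 2) ^ (-κ - 1)) w := by
    intro w
    rw [hpf]
    have h1 : HasDerivAt (fun v : ℝ => 1 + σH / σg * (v - wstar) ^ 2)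
        (σH / σg * (2 * (w - wstar))) w := by
      have h0 : HasDerivAt (fun v : ℝ => (v - wstar) ^ 2) (2 * (w - wstar)) w := by
        have := ((hasDerivAt_id w).sub_const wstar).fun_pow 2
        simpa using this
      simpa using (h0.const_mul (σH / σg)).const_add 1
    exact h1.rpow_const (Or.inl (hbase w).ne')
  have key : ∀ w, g w * p w + η / 2 * C w * deriv p w = 0 := by
    intro w
    rw [(hderiv w).deriv, hg, hC, hL, hpf]
    have hsub : (1 + σH / σg * (w - wstar) ^ 2) ^ (-κ - 1)
        = (1 + σH / σg * (w - wstar) ^ 2) ^ (-κ) / (1 + σH / σg * (w - wstar) ^ 2) := by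
      exact Real.rpow_sub_one (hbase w).ne' (-κ)
    rw [hsub, hκ]
    have h2 : (1 + σH / σg * (w - wstar) ^ 2) ≠ 0 := (hbase w).ne'
    field_simp
    ring
  refine ⟨key, fun w => ?_⟩
  have : (fun v => g v * p v + η / 2 * C v * deriv p v) = fun _ => (0:ℝ) :=
    funext key
  rw [this]
  simp
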